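/- Let Y : [s,r] × ∂B(0,1) → ℝ be given by Y(t,x) = f(tx+Q)/t^d for a C¹ function f vanishing at Q, where 0 < s < r, and let γ > 0. Then ∫_{∂B(0,1)} |Y(r,x) - Y(s,x)|² dσ(x) ≤ ((r^γ - s^γ)/γ) ∫_s^r t^{-γ-(n-2+2d)} ∫_{∂B(Q,t)} (ν·∇f(y) - (d/t) f(y))² dσ(y) dt. -/

import Mathlib

open MeasureTheory Metric Filter Set
open scoped ENNReal NNReal Topology RealInnerProductSpace

noncomputable section

abbrev E (n : ℕ) := EuclideanSpace ℝ (Fin n)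

/-- The Laplacian of `f : ℝⁿ → ℝ`, as the sum of second partial derivatives. -/
def lap (n : ℕ) (f : E n → ℝ) (x : E n) : ℝ :=
  ∑ i : Fin n, fderiv ℝ (fun y => fderiv ℝ f y (EuclideanSpace.single i 1)) x
    (EuclideanSpace.single i 1)

/-- The Weiss-type functional
`W_d(r,Q,f) = r^{-(n-2+2d)} ∫_{B(Q,r)} |∇f|² - d r^{-(n-1+2d)} ∫_{∂B(Q,r)} f² dσ`,
with surface measure given by the `(n-1)`-dimensional Hausdorff measure. -/
def weiss (n : ℕ) (d r : ℝ) (Q : E n) (f : E n → ℝ) : ℝ :=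
  (1 / r ^ ((n : ℝ) - 2 + 2 * d)) * (∫ x in ball Q r, ‖gradient f x‖ ^ 2)
    - (d / r ^ ((n : ℝ) - 1 + 2 * d)) * ∫ x in sphere Q r, (f x) ^ 2 ∂μH[(n : ℝ) - 1]


lemma map_affine_hausdorff (n : ℕ) {d : ℝ} (hd : 0 ≤ d) (Q : E n) {t : ℝ} (ht : t ≠ 0) :
    Measure.map (fun x : E n => Q + t • x) μH[d] = ((‖t‖₊ : ℝ≥0∞) ^ d)⁻¹ • μH[d] := by
  have hmeas : Measurable (fun x : E n => Q + t • x) :=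
    (continuous_const.add (continuous_const_smul t)).measurable
  refine Measure.ext fun A hA => ?_
  rw [Measure.map_apply hmeas hA, Measure.smul_apply]
  have h1 : (fun x : E n => Q + t • x) ⁻¹' A = (t • ·) ⁻¹' ((Q + ·) ⁻¹' A) := rfl
  have hiso : Isometry (fun y : E n => Q + y) := Isometry.of_dist_eq fun a b => by
    simp [dist_eq_norm]
  have h2 : μH[d] ((Q + ·) ⁻¹' A) = μH[d] A := by
    have := hiso.hausdorffMeasure_preimage (Or.inl hd) A
    have hr : range (fun y : E n => Q + y) = univ := by
      ext z; simp [eq_comm]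
      exact ⟨z - Q, by abel⟩
    rwa [hr, inter_univ] at this
  rw [h1, preimage_smul₀ ht, Measure.hausdorffMeasure_smul₀ hd (inv_ne_zero ht), ← h2]
  simp only [nnnorm_inv, smul_eq_mul]
  rw [ENNReal.smul_def, smul_eq_mul]
  congr 1
  rw [NNReal.inv_rpow, ENNReal.coe_inv (by exact (NNReal.rpow_pos (by simp [pos_iff_ne_zero, ht] : (0:ℝ≥0) < ‖t‖₊)).ne' : ‖t‖₊ ^ d ≠ 0), ENNReal.coe_rpow_of_nonneg _ hd]

lemma preimage_affine_sphere (n : ℕ) (Q : E n) {t : ℝ} (ht : 0 < t) :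
    (fun x : E n => Q + t • x) ⁻¹' (sphere Q t) = sphere (0 : E n) 1 := by
  ext x
  simp only [mem_preimage, mem_sphere_iff_norm, add_sub_cancel_left, norm_smul,
    Real.norm_eq_abs, abs_of_pos ht, sub_zero]
  constructor
  · intro h; nlinarith [norm_nonneg x]
  · intro h; rw [h, mul_one]

lemma setIntegral_sphere_comp (n : ℕ) {d : ℝ} (hd : 0 ≤ d) (Q : E n) {t : ℝ} (ht : 0 < t)
    {G : E n → ℝ} (hG : Continuous G) :
    ∫ y in sphere Q t, G y ∂μH[d]
      = t ^ d * ∫ x in sphere (0 : E n) 1, G (Q + t • x) ∂μH[d] := by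
  have hmeas : Measurable (fun x : E n => Q + t • x) :=
    (continuous_const.add (continuous_const_smul t)).measurable
  have hmap := map_affine_hausdorff n hd Q ht.ne'
  have hsm : MeasurableSet (sphere Q t) := isClosed_sphere.measurableSet
  have h1 : ∫ y in sphere Q t, G y ∂(Measure.map (fun x : E n => Q + t • x) μH[d])
      = ∫ x in sphere (0 : E n) 1, G (Q + t • x) ∂μH[d] := by
    rw [setIntegral_map hsm (hG.aestronglyMeasurable) hmeas.aemeasurable,
      preimage_affine_sphere n Q ht]
  have h2 : ∫ y in sphere Q t, G y ∂(Measure.map (fun x : E n => Q + t • x) μH[d])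
      = (((‖t‖₊ : ℝ≥0∞) ^ d)⁻¹).toReal * ∫ y in sphere Q t, G y ∂μH[d] := by
    rw [hmap, Measure.restrict_smul, integral_smul_measure, smul_eq_mul]
  have h3 : (((‖t‖₊ : ℝ≥0∞) ^ d)⁻¹).toReal = (t ^ d)⁻¹ := by
    rw [ENNReal.toReal_inv, ← ENNReal.coe_rpow_of_nonneg _ hd, ENNReal.coe_toReal,
      NNReal.coe_rpow, coe_nnnorm, Real.norm_eq_abs, abs_of_pos ht]
  rw [h2, h3] at h1
  have htd : (0:ℝ) < t ^ d := Real.rpow_pos_of_pos ht d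
  field_simp at h1 ⊢
  linarith [h1]

lemma abs_coord_le_norm {n : ℕ} (y : E n) (i : Fin n) : |y i| ≤ ‖y‖ := by
  rw [EuclideanSpace.norm_eq, ← Real.sqrt_sq_eq_abs]
  apply Real.sqrt_le_sqrt
  have : |y i| ^ 2 ≤ ∑ j, |y j| ^ 2 :=
    Finset.single_le_sum (f := fun j => |y j| ^ 2) (fun j _ => by positivity) (Finset.mem_univ i)
  simpa [sq_abs] using this

lemma lip_normalize {F : Type*} [NormedAddCommGroup F] [NormedSpace ℝ F] :
    LipschitzOnWith 2 (fun y : F => ‖y‖⁻¹ • y) {y | 1 ≤ ‖y‖} := by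
  rw [lipschitzOnWith_iff_dist_le_mul]
  intro a ha b hb
  simp only [mem_setOf_eq] at ha hb
  have hA : (0:ℝ) < ‖a‖ := lt_of_lt_of_le one_pos ha
  have hB : (0:ℝ) < ‖b‖ := lt_of_lt_of_le one_pos hb
  rw [dist_eq_norm, dist_eq_norm]
  have key : ‖a‖⁻¹ • a - ‖b‖⁻¹ • b = ‖a‖⁻¹ • (a - b) + (‖a‖⁻¹ - ‖b‖⁻¹) • b := by
    rw [smul_sub, sub_smul]; abel
  rw [key]
  refine le_trans (norm_add_le _ _) ?_
  rw [norm_smul, norm_smul, Real.norm_eq_abs, Real.norm_eq_abs]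
  have h1 : |‖a‖⁻¹| = ‖a‖⁻¹ := abs_of_pos (by positivity)
  have h2 : |‖a‖⁻¹ - ‖b‖⁻¹| * ‖b‖ = |‖b‖ - ‖a‖| / ‖a‖ := by
    have : ‖a‖⁻¹ - ‖b‖⁻¹ = (‖b‖ - ‖a‖) / (‖a‖ * ‖b‖) := by field_simp
    rw [this, abs_div, abs_of_pos (by positivity : (0:ℝ) < ‖a‖ * ‖b‖)]
    field_simp
  rw [h1, h2]
  have h3 : |‖b‖ - ‖a‖| ≤ ‖a - b‖ := by
    rw [abs_sub_comm]; exact abs_norm_sub_norm_le a b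
  have h4 : ‖a‖⁻¹ ≤ 1 := by
    rw [inv_le_one_iff₀]; right; exact ha
  have h5 : ‖a‖⁻¹ * ‖a - b‖ ≤ ‖a - b‖ := by
    nlinarith [norm_nonneg (a - b)]
  have h6 : |‖b‖ - ‖a‖| / ‖a‖ ≤ ‖a - b‖ := by
    rw [div_le_iff₀ hA]
    nlinarith [abs_nonneg (‖b‖ - ‖a‖)]
  push_cast
  linarith

def faceMap (m : ℕ) (i : Fin (m + 1)) (c : ℝ) : (Fin m → ℝ) → E (m + 1) := fun z =>
  (EuclideanSpace.equiv (Fin (m + 1)) ℝ).symm (i.insertNth c z)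

lemma faceMap_apply (m : ℕ) (i : Fin (m + 1)) (c : ℝ) (z : Fin m → ℝ) (j : Fin (m + 1)) :
    faceMap m i c z j = Fin.insertNth (α := fun _ => ℝ) i c z j := rfl

lemma faceMap_lipschitz (m : ℕ) (i : Fin (m + 1)) (c : ℝ) :
    LipschitzWith (m + 1 : ℝ≥0) (faceMap m i c) := by
  apply LipschitzWith.of_dist_le_mul
  intro z z'
  rw [EuclideanSpace.dist_eq]
  have hsum : ∑ j : Fin (m + 1), dist (faceMap m i c z j) (faceMap m i c z' j) ^ 2
      = ∑ k : Fin m, dist (z k) (z' k) ^ 2 := by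
    rw [Fin.sum_univ_succAbove _ i]
    simp [faceMap_apply]
  rw [hsum]
  have hbd : ∑ k : Fin m, dist (z k) (z' k) ^ 2 ≤ (m : ℝ) * dist z z' ^ 2 := by
    calc ∑ k : Fin m, dist (z k) (z' k) ^ 2 ≤ ∑ _k : Fin m, dist z z' ^ 2 := by
          apply Finset.sum_le_sum
          intro k _
          exact pow_le_pow_left₀ dist_nonneg (dist_le_pi_dist z z' k) 2
      _ = (m : ℝ) * dist z z' ^ 2 := by simp [mul_comm]
  refine le_trans (Real.sqrt_le_sqrt hbd) ?_
  rw [Real.sqrt_mul (by positivity), Real.sqrt_sq dist_nonneg]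
  have : Real.sqrt m ≤ (m : ℝ) + 1 := by
    refine le_trans (Real.sqrt_le_sqrt (by nlinarith [(by positivity : (0:ℝ) ≤ (m:ℝ))] : (m:ℝ) ≤ ((m:ℝ)+1)^2)) ?_
    rw [Real.sqrt_sq (by positivity)]
  push_cast
  nlinarith [dist_nonneg (x := z) (y := z')]

lemma sphere_cover (m : ℕ) :
    sphere (0 : E (m + 1)) 1 ⊆ (fun y : E (m + 1) => ‖y‖⁻¹ • y) ''
      (⋃ i : Fin (m + 1),
        (faceMap m i 1 '' (univ.pi fun _ : Fin m => Icc (-1 : ℝ) 1) ∪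
         faceMap m i (-1) '' (univ.pi fun _ : Fin m => Icc (-1 : ℝ) 1))) := by
  intro x hx
  have hxn : ‖x‖ = 1 := by simpa using hx
  obtain ⟨i, -, hi⟩ := Finset.exists_max_image Finset.univ (fun j => |x j|) ⟨0, Finset.mem_univ 0⟩
  have hx0 : x ≠ 0 := by intro h; rw [h, norm_zero] at hxn; exact one_ne_zero hxn.symm
  have ha : 0 < |x i| := by
    rcases (abs_nonneg (x i)).lt_or_eq with h | h
    · exact h
    · exfalso
      apply hx0
      ext j
      have := hi j (Finset.mem_univ j)
      rw [← h] at this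
      simpa using le_antisymm this (abs_nonneg _)
  set a := |x i| with hadef
  set y : E (m + 1) := a⁻¹ • x with hydef
  have hyi : |y i| = 1 := by
    have : y i = a⁻¹ * x i := rfl
    rw [this, abs_mul, abs_of_pos (by positivity : (0:ℝ) < a⁻¹)]
    field_simp
    exact hadef.symm
  have hyn : ‖y‖ = a⁻¹ := by
    rw [hydef, norm_smul, Real.norm_eq_abs, abs_of_pos (by positivity : (0:ℝ) < a⁻¹), hxn, mul_one]
  have hgy : ‖y‖⁻¹ • y = x := by
    rw [hyn, inv_inv, hydef, smul_smul, mul_inv_cancel₀ ha.ne', one_smul]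
  have hym : y = faceMap m i (y i) (Fin.removeNth i y) := by
    have := Fin.insertNth_self_removeNth (α := fun _ : Fin (m+1) => ℝ) i y
    exact congrArg ((EuclideanSpace.equiv (Fin (m + 1)) ℝ).symm) this.symm
  have hz : Fin.removeNth i y ∈ univ.pi fun _ : Fin m => Icc (-1 : ℝ) 1 := by
    intro k _
    have hb : |y (i.succAbove k)| ≤ 1 := by
      have : y (i.succAbove k) = a⁻¹ * x (i.succAbove k) := rfl
      rw [this, abs_mul, abs_of_pos (by positivity : (0:ℝ) < a⁻¹)]
      have := hi (i.succAbove k) (Finset.mem_univ _)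
      calc a⁻¹ * |x (i.succAbove k)| ≤ a⁻¹ * a := by
            apply mul_le_mul_of_nonneg_left this (by positivity)
        _ = 1 := by field_simp
    have hr : Fin.removeNth i y k = y (i.succAbove k) := rfl
    rw [hr]
    constructor
    · linarith [neg_abs_le (y (i.succAbove k))]
    · linarith [le_abs_self (y (i.succAbove k))]
  refine ⟨y, ?_, hgy⟩
  apply mem_iUnion.mpr
  refine ⟨i, ?_⟩
  rcases abs_eq (by norm_num : (0:ℝ) ≤ 1) |>.mp hyi with h1 | h1
  · left; exact ⟨Fin.removeNth i y, hz, by rw [← h1]; exact hym.symm⟩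
  · right; exact ⟨Fin.removeNth i y, hz, by rw [← h1]; exact hym.symm⟩

lemma sphere_hausdorff_lt_top (m : ℕ) :
    μH[(m : ℝ)] (sphere (0 : E (m + 1)) 1) < ∞ := by
  set B : Set (Fin m → ℝ) := univ.pi fun _ : Fin m => Icc (-1 : ℝ) 1 with hB
  set T : Set (E (m + 1)) :=
    ⋃ i : Fin (m + 1), (faceMap m i 1 '' B ∪ faceMap m i (-1) '' B) with hT
  have hd : (0:ℝ) ≤ (m : ℝ) := by positivity
  -- faces have finite measure
  have hface : ∀ (i : Fin (m + 1)) (c : ℝ), μH[(m : ℝ)] (faceMap m i c '' B) < ∞ := by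
    intro i c
    have hb := (faceMap_lipschitz m i c).hausdorffMeasure_image_le hd B
    have hpi : (μH[(m : ℝ)] : Measure (Fin m → ℝ)) = volume := by
      have := hausdorffMeasure_pi_real (ι := Fin m)
      simpa using this
    rw [hpi] at hb
    have hBc : IsCompact B := isCompact_univ_pi fun _ => isCompact_Icc
    refine lt_of_le_of_lt hb ?_
    exact ENNReal.mul_lt_top (ENNReal.rpow_lt_top_of_nonneg hd ENNReal.coe_ne_top) hBc.measure_lt_top
  have hTfin : μH[(m : ℝ)] T < ∞ := by
    refine lt_of_le_of_lt (measure_iUnion_le _) ?_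
    have : ∀ i : Fin (m + 1), μH[(m : ℝ)] (faceMap m i 1 '' B ∪ faceMap m i (-1) '' B) < ∞ :=
      fun i => lt_of_le_of_lt (measure_union_le _ _) (ENNReal.add_lt_top.mpr ⟨hface i 1, hface i (-1)⟩)
    rw [tsum_fintype]
    exact ENNReal.sum_lt_top.mpr fun i _ => this i
  have hTsub : T ⊆ {y : E (m + 1) | 1 ≤ ‖y‖} := by
    rintro y hy
    simp only [hT, mem_iUnion, mem_union] at hy
    obtain ⟨i, hy⟩ := hy
    have key : ∀ c : ℝ, |c| = 1 → y ∈ faceMap m i c '' B → 1 ≤ ‖y‖ := by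
      rintro c hc ⟨z, -, rfl⟩
      have : faceMap m i c z i = c := by
        rw [faceMap_apply]; exact Fin.insertNth_apply_same (α := fun _ => ℝ) i c z
      calc (1:ℝ) = |faceMap m i c z i| := by rw [this, hc]
        _ ≤ ‖faceMap m i c z‖ := abs_coord_le_norm _ i
    rcases hy with hy | hy
    · exact key 1 (by norm_num) hy
    · exact key (-1) (by norm_num) hy
  have hlip : LipschitzOnWith 2 (fun y : E (m + 1) => ‖y‖⁻¹ • y) T :=
    lip_normalize.mono hTsub
  calc μH[(m : ℝ)] (sphere (0 : E (m + 1)) 1)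
      ≤ μH[(m : ℝ)] ((fun y : E (m + 1) => ‖y‖⁻¹ • y) '' T) := measure_mono (sphere_cover m)
    _ ≤ (2 : ℝ≥0∞) ^ (m : ℝ) * μH[(m : ℝ)] T := by
        simpa using hlip.hausdorffMeasure_image_le hd
    _ < ∞ := ENNReal.mul_lt_top (ENNReal.rpow_lt_top_of_nonneg hd (by norm_num)) hTfin

lemma continuous_gradient {n : ℕ} {f : E n → ℝ} (hf : ContDiff ℝ 1 f) :
    Continuous (gradient f) :=
  (InnerProductSpace.toDual ℝ (E n)).symm.continuous.comp (hf.continuous_fderiv one_ne_zero)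

lemma inner_gradient {n : ℕ} (f : E n → ℝ) (y v : E n) :
    ⟪gradient f y, v⟫ = fderiv ℝ f y v :=
  InnerProductSpace.toDual_symm_apply

lemma pointwise_CS (n : ℕ) (d : ℝ) (hd : 0 < d) (γ : ℝ) (hγ : 0 < γ)
    (Q : E n) (f : E n → ℝ) (hf : ContDiff ℝ 1 f)
    (s r : ℝ) (hs : 0 < s) (hsr : s < r) (x : E n) :
    (f (Q + r • x) / r ^ d - f (Q + s • x) / s ^ d) ^ 2 ≤
      (r ^ γ - s ^ γ) / γ *
        ∫ t in Set.Ioc s r,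
          t ^ (1 - γ - 2 * d) * (⟪gradient f (Q + t • x), x⟫ - d / t * f (Q + t • x)) ^ 2 := by
  have hr : 0 < r := hs.trans hsr
  set φ : ℝ → ℝ := fun t => f (Q + t • x) * t ^ (-d) with hφ
  set g : ℝ → ℝ := fun t => ⟪gradient f (Q + t • x), x⟫ - d / t * f (Q + t • x) with hg
  set D : ℝ → ℝ := fun t => g t * t ^ (-d) with hD
  have huIcc : uIcc s r = Icc s r := uIcc_of_le hsr.le
  -- derivative
  have hderiv : ∀ t ∈ uIcc s r, HasDerivAt φ (D t) t := by
    intro t ht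
    rw [huIcc] at ht
    have ht0 : 0 < t := lt_of_lt_of_le hs ht.1
    have hline : HasDerivAt (fun u : ℝ => Q + u • x) x t := by
      simpa using ((hasDerivAt_id t).smul_const x).const_add Q
    have h1 : HasDerivAt (fun u : ℝ => f (Q + u • x)) (fderiv ℝ f (Q + t • x) x) t :=
      (hf.differentiable one_ne_zero (Q + t • x)).hasFDerivAt.comp_hasDerivAt t hline
    have hpow : HasDerivAt (fun u : ℝ => u ^ (-d)) (-d * t ^ (-d - 1)) t :=
      Real.hasDerivAt_rpow_const (Or.inl ht0.ne')
    have : HasDerivAt (fun u : ℝ => f (Q + u • x) * u ^ (-d))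
        (fderiv ℝ f (Q + t • x) x * t ^ (-d) + f (Q + t • x) * (-d * t ^ (-d - 1))) t :=
      h1.mul hpow
    convert this using 1
    have hsplit : t ^ (-d - 1) = t ^ (-d) * t⁻¹ := by
      rw [show -d - 1 = -d + (-1) by ring, Real.rpow_add ht0, Real.rpow_neg_one]
    simp only [hD, hg, hsplit, inner_gradient]
    field_simp
    ring
  -- continuity of D on [s,r]
  have hDcont : ContinuousOn D (Icc s r) := by
    have hc1 : Continuous fun t : ℝ => f (Q + t • x) :=
      hf.continuous.comp (continuous_const.add (continuous_id.smul continuous_const))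
    have hc2 : Continuous fun t : ℝ => (⟪gradient f (Q + t • x), x⟫ : ℝ) :=
      Continuous.inner ((continuous_gradient hf).comp
        (continuous_const.add (continuous_id.smul continuous_const))) continuous_const
    have hne : ∀ t ∈ Icc s r, t ≠ 0 := fun t ht => (lt_of_lt_of_le hs ht.1).ne'
    have hc3 : ContinuousOn (fun t : ℝ => d / t) (Icc s r) :=
      continuousOn_const.div continuousOn_id hne
    have hc4 : ContinuousOn (fun t : ℝ => t ^ (-d)) (Icc s r) :=
      continuousOn_id.rpow_const fun t ht => Or.inl (hne t ht)
    exact ((hc2.continuousOn.sub (hc3.mul hc1.continuousOn)).mul hc4)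
  -- FTC
  have hFTC : ∫ t in s..r, D t = φ r - φ s :=
    intervalIntegral.integral_eq_sub_of_hasDerivAt hderiv
      ((hDcont.mono (by rw [huIcc])).intervalIntegrable)
  have hIoc : ∫ t in s..r, D t = ∫ t in Set.Ioc s r, D t :=
    intervalIntegral.integral_of_le hsr.le
  have hLHS : f (Q + r • x) / r ^ d - f (Q + s • x) / s ^ d = ∫ t in Set.Ioc s r, D t := by
    rw [← hIoc, hFTC, hφ]
    simp only []
    rw [Real.rpow_neg hr.le, Real.rpow_neg hs.le]
    ring
  -- Cauchy-Schwarz part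
  set μ := volume.restrict (Set.Ioc s r) with hμ
  haveI : IsFiniteMeasure μ := by
    constructor
    rw [hμ, Measure.restrict_apply_univ, Real.volume_Ioc]
    exact ENNReal.ofReal_lt_top
  set a : ℝ → ℝ := fun t => t ^ ((γ - 1) / 2) with ha
  set b : ℝ → ℝ := fun t => t ^ ((1 - γ) / 2 - d) * |g t| with hb
  have hgcont : ContinuousOn g (Icc s r) := by
    have hc1 : Continuous fun t : ℝ => f (Q + t • x) :=
      hf.continuous.comp (continuous_const.add (continuous_id.smul continuous_const))
    have hc2 : Continuous fun t : ℝ => (⟪gradient f (Q + t • x), x⟫ : ℝ) :=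
      Continuous.inner ((continuous_gradient hf).comp
        (continuous_const.add (continuous_id.smul continuous_const))) continuous_const
    have hne : ∀ t ∈ Icc s r, t ≠ 0 := fun t ht => (lt_of_lt_of_le hs ht.1).ne'
    exact hc2.continuousOn.sub ((continuousOn_const.div continuousOn_id hne).mul hc1.continuousOn)
  have hne : ∀ t ∈ Icc s r, t ≠ 0 := fun t ht => (lt_of_lt_of_le hs ht.1).ne'
  have ha_cont : ContinuousOn a (Icc s r) :=
    continuousOn_id.rpow_const fun t ht => Or.inl (hne t ht)
  have hb_cont : ContinuousOn b (Icc s r) :=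
    (continuousOn_id.rpow_const fun t ht => Or.inl (hne t ht)).mul hgcont.abs
  have hmema : MemLp a (ENNReal.ofReal 2) μ := by
    obtain ⟨C, hC⟩ := isCompact_Icc.exists_bound_of_continuousOn ha_cont
    refine MemLp.of_bound ((ha_cont.mono Ioc_subset_Icc_self).aestronglyMeasurable
      measurableSet_Ioc) C ?_
    filter_upwards [ae_restrict_mem measurableSet_Ioc] with t ht
    exact hC t (Ioc_subset_Icc_self ht)
  have hmemb : MemLp b (ENNReal.ofReal 2) μ := by
    obtain ⟨C, hC⟩ := isCompact_Icc.exists_bound_of_continuousOn hb_cont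
    refine MemLp.of_bound ((hb_cont.mono Ioc_subset_Icc_self).aestronglyMeasurable
      measurableSet_Ioc) C ?_
    filter_upwards [ae_restrict_mem measurableSet_Ioc] with t ht
    exact hC t (Ioc_subset_Icc_self ht)
  have ha_nonneg : 0 ≤ᵐ[μ] a := by
    filter_upwards [ae_restrict_mem measurableSet_Ioc] with t ht
    exact Real.rpow_nonneg (le_of_lt (hs.trans ht.1)) _
  have hb_nonneg : 0 ≤ᵐ[μ] b := by
    filter_upwards [ae_restrict_mem measurableSet_Ioc] with t ht
    exact mul_nonneg (Real.rpow_nonneg (le_of_lt (hs.trans ht.1)) _) (abs_nonneg _)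
  have hconj : (2:ℝ).HolderConjugate 2 := ⟨by norm_num, by norm_num, by norm_num⟩
  have hHolder := integral_mul_le_Lp_mul_Lq_of_nonneg hconj ha_nonneg hb_nonneg hmema hmemb
  -- identify a*b with |D|
  have hab : ∀ t ∈ Set.Ioc s r, a t * b t = |D t| := by
    intro t ht
    have ht0 : 0 < t := hs.trans ht.1
    have : a t * b t = t ^ ((γ - 1) / 2 + ((1 - γ) / 2 - d)) * |g t| := by
      rw [ha, hb, ← mul_assoc, ← Real.rpow_add ht0]
    rw [this, show (γ - 1) / 2 + ((1 - γ) / 2 - d) = -d by ring, hD]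
    rw [abs_mul, abs_of_pos (Real.rpow_pos_of_pos ht0 _), mul_comm]
  have ha2 : ∀ t ∈ Set.Ioc s r, a t ^ (2:ℝ) = t ^ (γ - 1) := by
    intro t ht
    have ht0 : 0 < t := hs.trans ht.1
    rw [ha, ← Real.rpow_mul ht0.le, show (γ - 1) / 2 * 2 = γ - 1 by ring]
  have hb2 : ∀ t ∈ Set.Ioc s r, b t ^ (2:ℝ) = t ^ (1 - γ - 2 * d) * (g t) ^ 2 := by
    intro t ht
    have ht0 : 0 < t := hs.trans ht.1
    rw [hb, Real.mul_rpow (Real.rpow_nonneg ht0.le _) (abs_nonneg _),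
      ← Real.rpow_mul ht0.le, show ((1 - γ) / 2 - d) * 2 = 1 - γ - 2 * d by ring]
    congr 1
    rw [show (2:ℝ) = ((2:ℕ):ℝ) by norm_num, Real.rpow_natCast, sq_abs]
  have hXval : ∫ t, a t ^ (2:ℝ) ∂μ = (r ^ γ - s ^ γ) / γ := by
    rw [hμ, setIntegral_congr_fun measurableSet_Ioc (fun t ht => ha2 t ht),
      ← intervalIntegral.integral_of_le hsr.le,
      integral_rpow (Or.inl (by linarith : (-1:ℝ) < γ - 1))]
    norm_num
  have hYval : ∫ t, b t ^ (2:ℝ) ∂μ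
      = ∫ t in Set.Ioc s r, t ^ (1 - γ - 2 * d) * (g t) ^ 2 := by
    rw [hμ]
    exact setIntegral_congr_fun measurableSet_Ioc (fun t ht => hb2 t ht)
  set X := ∫ t, a t ^ (2:ℝ) ∂μ with hX
  set Y := ∫ t, b t ^ (2:ℝ) ∂μ with hY
  have hX0 : 0 ≤ X := by
    refine integral_nonneg_of_ae ?_
    filter_upwards [ha_nonneg] with t ht
    exact Real.rpow_nonneg ht _
  have hY0 : 0 ≤ Y := by
    refine integral_nonneg_of_ae ?_
    filter_upwards [hb_nonneg] with t ht
    exact Real.rpow_nonneg ht _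
  have hsq : ∀ Z : ℝ, 0 ≤ Z → (Z ^ ((1:ℝ)/2)) ^ 2 = Z := by
    intro Z hZ
    rw [show (2:ℕ) = ((2:ℕ)) by rfl, ← Real.rpow_natCast (Z ^ ((1:ℝ)/2)) 2,
      ← Real.rpow_mul hZ]
    norm_num
  -- assemble
  have hDint : ∫ t, a t * b t ∂μ = ∫ t, |D t| ∂μ := by
    rw [hμ]
    exact setIntegral_congr_fun measurableSet_Ioc (fun t ht => hab t ht)
  have habs : |∫ t, D t ∂μ| ≤ ∫ t, |D t| ∂μ := by
    simpa [Real.norm_eq_abs] using norm_integral_le_integral_norm (μ := μ) D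
  have hab_nonneg : 0 ≤ ∫ t, a t * b t ∂μ := by
    refine integral_nonneg_of_ae ?_
    filter_upwards [ha_nonneg, hb_nonneg] with t h1 h2
    exact mul_nonneg h1 h2
  have key : (∫ t, D t ∂μ) ^ 2 ≤ X * Y := by
    have h1 : (∫ t, D t ∂μ) ^ 2 ≤ (∫ t, a t * b t ∂μ) ^ 2 := by
      rw [← sq_abs (∫ t, D t ∂μ)]
      rw [hDint]
      exact pow_le_pow_left₀ (abs_nonneg _) habs 2
    have h2 : (∫ t, a t * b t ∂μ) ^ 2 ≤ (X ^ ((1:ℝ)/2) * Y ^ ((1:ℝ)/2)) ^ 2 := by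
      refine pow_le_pow_left₀ hab_nonneg ?_ 2
      simpa [hX, hY] using hHolder
    refine h1.trans (h2.trans_eq ?_)
    rw [mul_pow, hsq X hX0, hsq Y hY0]
  rw [hLHS]
  refine key.trans ?_
  rw [hXval, hYval]

/-- Estimate (6.1)–(6.3) of the paper: the spherical `L²` distance between the blowups
`Y(t,x) = f(Q+tx)/t^d` at two scales is controlled by the weighted integral of
`(ν·∇f - (d/t) f)²` over intermediate spheres. -/
theorem stmt_16 (n : ℕ) (hn : 2 ≤ n) (d : ℝ) (hd : 0 < d) (γ : ℝ) (hγ : 0 < γ)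
    (Q : E n) (f : E n → ℝ) (hf : ContDiff ℝ 1 f) (hfQ : f Q = 0)
    (s r : ℝ) (hs : 0 < s) (hsr : s < r) :
    ∫ x in sphere (0 : E n) 1,
        (f (Q + r • x) / r ^ d - f (Q + s • x) / s ^ d) ^ 2 ∂μH[(n : ℝ) - 1] ≤
      (r ^ γ - s ^ γ) / γ *
        ∫ t in Set.Ioc s r,
          t ^ (-γ - ((n : ℝ) - 2 + 2 * d)) *
            ∫ y in sphere Q t,
              (⟪gradient f y, t⁻¹ • (y - Q)⟫ - d / t * f y) ^ 2 ∂μH[(n : ℝ) - 1] := by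
  have hr : 0 < r := hs.trans hsr
  have hn1 : (0:ℝ) ≤ (n : ℝ) - 1 := by
    have : (2:ℝ) ≤ (n:ℝ) := by exact_mod_cast hn
    linarith
  -- finiteness of the surface measure of the unit sphere
  have hσS : μH[(n : ℝ) - 1] (sphere (0 : E n) 1) < ∞ := by
    obtain ⟨m, rfl⟩ : ∃ m, n = m + 1 := ⟨n - 1, by omega⟩
    have hcast : ((m + 1 : ℕ) : ℝ) - 1 = (m : ℝ) := by push_cast; ring
    rw [hcast]
    exact sphere_hausdorff_lt_top m
  set σS := (μH[(n : ℝ) - 1] : Measure (E n)).restrict (sphere (0 : E n) 1) with hσSdef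
  set ν := (volume : Measure ℝ).restrict (Set.Ioc s r) with hνdef
  haveI : IsFiniteMeasure σS := ⟨by
    rw [hσSdef, Measure.restrict_apply_univ]; exact hσS⟩
  haveI : IsFiniteMeasure ν := ⟨by
    rw [hνdef, Measure.restrict_apply_univ, Real.volume_Ioc]; exact ENNReal.ofReal_lt_top⟩
  set F : E n × ℝ → ℝ := fun p =>
    p.2 ^ (1 - γ - 2 * d) *
      (⟪gradient f (Q + p.2 • p.1), p.1⟫ - d / p.2 * f (Q + p.2 • p.1)) ^ 2 with hFdef
  set C := (r ^ γ - s ^ γ) / γ with hCdef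
  -- continuity of F on the half-space
  have hFcont : ∀ p : E n × ℝ, 0 < p.2 → ContinuousAt F p := by
    intro p hp
    have h1 : ContinuousAt (fun q : E n × ℝ => q.2 ^ (1 - γ - 2 * d)) p :=
      (Real.continuousAt_rpow_const p.2 _ (Or.inl hp.ne')).comp continuous_snd.continuousAt
    have hmap : Continuous (fun q : E n × ℝ => Q + q.2 • q.1) :=
      continuous_const.add (continuous_snd.smul continuous_fst)
    have h2 : ContinuousAt (fun q : E n × ℝ => (⟪gradient f (Q + q.2 • q.1), q.1⟫ : ℝ)) p :=
      (Continuous.inner ((continuous_gradient hf).comp hmap) continuous_fst).continuousAt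
    have h3 : ContinuousAt (fun q : E n × ℝ => d / q.2) p :=
      continuousAt_const.div continuous_snd.continuousAt hp.ne'
    have h4 : ContinuousAt (fun q : E n × ℝ => f (Q + q.2 • q.1)) p :=
      (hf.continuous.comp hmap).continuousAt
    exact h1.mul ((h2.sub (h3.mul h4)).pow 2)
  -- product integrability of F
  have hFmeas : AEStronglyMeasurable F (σS.prod ν) := by
    have hU : MeasurableSet ((univ : Set (E n)) ×ˢ Ioi (0:ℝ)) :=
      MeasurableSet.univ.prod measurableSet_Ioi
    have hcompl : (σS.prod ν) (((univ : Set (E n)) ×ˢ Ioi (0:ℝ))ᶜ) = 0 := by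
      have : (((univ : Set (E n)) ×ˢ Ioi (0:ℝ))ᶜ) = (univ : Set (E n)) ×ˢ (Iic (0:ℝ)) := by
        ext q; simp [not_lt]
      rw [this, Measure.prod_prod]
      have : ν (Iic (0:ℝ)) = 0 := by
        rw [hνdef, Measure.restrict_apply measurableSet_Iic]
        have : Iic (0:ℝ) ∩ Set.Ioc s r = ∅ := by
          ext t; simp only [mem_inter_iff, mem_Iic, mem_Ioc, mem_empty_iff_false, iff_false]
          rintro ⟨h1, h2, -⟩; linarith
        rw [this]; simp
      rw [this, mul_zero]
    have hres : (σS.prod ν).restrict ((univ : Set (E n)) ×ˢ Ioi (0:ℝ)) = σS.prod ν :=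
      Measure.restrict_eq_self_of_ae_mem (by
        rw [Filter.eventually_iff, mem_ae_iff]
        simp only [Set.setOf_mem_eq]
        exact hcompl)
    have hcont : ContinuousOn F ((univ : Set (E n)) ×ˢ Ioi (0:ℝ)) := fun p hp =>
      (hFcont p hp.2).continuousWithinAt
    have := hcont.aestronglyMeasurable (μ := σS.prod ν) hU
    rwa [hres] at this
  have haeK : ∀ᵐ p ∂(σS.prod ν), p ∈ sphere (0 : E n) 1 ×ˢ Set.Ioc s r := by
    rw [Filter.eventually_iff, mem_ae_iff]
    have hc : (sphere (0 : E n) 1 ×ˢ Set.Ioc s r)ᶜ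
        = ((sphere (0 : E n) 1)ᶜ ×ˢ (univ : Set ℝ)) ∪ ((univ : Set (E n)) ×ˢ (Set.Ioc s r)ᶜ) :=
      compl_prod_eq_union _ _
    have h1 : (σS.prod ν) ((sphere (0 : E n) 1)ᶜ ×ˢ (univ : Set ℝ)) = 0 := by
      rw [Measure.prod_prod]
      have : σS ((sphere (0 : E n) 1)ᶜ) = 0 := by
        rw [hσSdef, Measure.restrict_apply (isClosed_sphere.measurableSet.compl)]
        simp
      rw [this, zero_mul]
    have h2 : (σS.prod ν) ((univ : Set (E n)) ×ˢ (Set.Ioc s r)ᶜ) = 0 := by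
      rw [Measure.prod_prod]
      have : ν ((Set.Ioc s r)ᶜ) = 0 := by
        rw [hνdef, Measure.restrict_apply measurableSet_Ioc.compl]
        simp
      rw [this, mul_zero]
    have hz : (σS.prod ν) ((sphere (0 : E n) 1 ×ˢ Set.Ioc s r)ᶜ) = 0 := by
      refine le_antisymm ?_ zero_le
      rw [hc]
      refine le_trans (measure_union_le _ _) ?_
      rw [h1, h2, add_zero]
    exact hz
  have hFint : Integrable F (σS.prod ν) := by
    have hK : IsCompact (sphere (0 : E n) 1 ×ˢ Icc s r) :=
      (isCompact_sphere _ _).prod isCompact_Icc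
    have hKsub : sphere (0 : E n) 1 ×ˢ Icc s r ⊆ (univ : Set (E n)) ×ˢ Ioi (0:ℝ) := by
      rintro ⟨x, t⟩ ⟨-, ht⟩
      exact ⟨mem_univ _, lt_of_lt_of_le hs ht.1⟩
    obtain ⟨C₀, hC₀⟩ := hK.exists_bound_of_continuousOn
      (fun p hp => ((hFcont p (hKsub hp).2).continuousWithinAt))
    refine Integrable.mono' (integrable_const C₀) hFmeas ?_
    filter_upwards [haeK] with p hp
    exact hC₀ p ⟨hp.1, Ioc_subset_Icc_self hp.2⟩
  -- step A : pointwise estimate integrated over the sphere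
  have hstepA : ∫ x in sphere (0 : E n) 1,
      (f (Q + r • x) / r ^ d - f (Q + s • x) / s ^ d) ^ 2 ∂μH[(n : ℝ) - 1]
      ≤ ∫ x, (C * ∫ t, F (x, t) ∂ν) ∂σS := by
    refine integral_mono_of_nonneg (ae_of_all _ fun x => by positivity) ?_ (ae_of_all _ ?_)
    · exact (hFint.integral_prod_left).const_mul C
    · intro x
      exact pointwise_CS n d hd γ hγ Q f hf s r hs hsr x
  -- pull out the constant and swap the integrals
  have hswap : ∫ x, (∫ t, F (x, t) ∂ν) ∂σS = ∫ t, (∫ x, F (x, t) ∂σS) ∂ν :=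
    integral_integral_swap hFint
  -- step D : change of variables on each sphere
  have hstepD : ∀ t ∈ Set.Ioc s r, ∫ x, F (x, t) ∂σS
      = t ^ (-γ - ((n : ℝ) - 2 + 2 * d)) *
          ∫ y in sphere Q t,
            (⟪gradient f y, t⁻¹ • (y - Q)⟫ - d / t * f y) ^ 2 ∂μH[(n : ℝ) - 1] := by
    intro t ht
    have ht0 : 0 < t := hs.trans ht.1
    set G : E n → ℝ := fun y => (⟪gradient f y, t⁻¹ • (y - Q)⟫ - d / t * f y) ^ 2 with hGdef
    have hGcont : Continuous G := by
      apply Continuous.pow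
      exact (Continuous.inner (continuous_gradient hf)
        ((continuous_id.sub continuous_const).const_smul t⁻¹)).sub
        (continuous_const.mul hf.continuous)
    have hcomp := setIntegral_sphere_comp n hn1 Q ht0 hGcont
    have hGcomp : ∀ x : E n, G (Q + t • x)
        = (⟪gradient f (Q + t • x), x⟫ - d / t * f (Q + t • x)) ^ 2 := by
      intro x
      have : t⁻¹ • (Q + t • x - Q) = x := by
        rw [add_sub_cancel_left, smul_smul, inv_mul_cancel₀ ht0.ne', one_smul]
      rw [hGdef]
      simp only [this]
    have step1 : ∫ x, F (x, t) ∂σS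
        = t ^ (1 - γ - 2 * d) * ∫ x, G (Q + t • x) ∂σS := by
      calc ∫ x, F (x, t) ∂σS = ∫ x, t ^ (1 - γ - 2 * d) * G (Q + t • x) ∂σS := by
            refine integral_congr_ae (ae_of_all _ fun x => ?_)
            simp only [hGcomp x, hFdef]
        _ = t ^ (1 - γ - 2 * d) * ∫ x, G (Q + t • x) ∂σS := by
            simpa [smul_eq_mul] using
              integral_smul (μ := σS) (t ^ (1 - γ - 2 * d)) fun x => G (Q + t • x)
    have h2 : ∫ x, G (Q + t • x) ∂σS
        = (t ^ ((n : ℝ) - 1))⁻¹ * ∫ y in sphere Q t, G y ∂μH[(n : ℝ) - 1] := by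
      rw [hσSdef]
      rw [hcomp, ← mul_assoc, inv_mul_cancel₀ (Real.rpow_pos_of_pos ht0 _).ne', one_mul]
    rw [step1, h2, ← mul_assoc]
    congr 1
    rw [← Real.rpow_neg ht0.le, ← Real.rpow_add ht0]
    congr 1
    ring
  calc ∫ x in sphere (0 : E n) 1,
      (f (Q + r • x) / r ^ d - f (Q + s • x) / s ^ d) ^ 2 ∂μH[(n : ℝ) - 1]
      ≤ ∫ x, (C * ∫ t, F (x, t) ∂ν) ∂σS := hstepA
    _ = C * ∫ x, (∫ t, F (x, t) ∂ν) ∂σS := by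
        simpa [smul_eq_mul] using integral_smul (μ := σS) C fun x => ∫ t, F (x, t) ∂ν
    _ = C * ∫ t, (∫ x, F (x, t) ∂σS) ∂ν := by rw [hswap]
    _ = C * ∫ t in Set.Ioc s r,
          t ^ (-γ - ((n : ℝ) - 2 + 2 * d)) *
            ∫ y in sphere Q t,
              (⟪gradient f y, t⁻¹ • (y - Q)⟫ - d / t * f y) ^ 2 ∂μH[(n : ℝ) - 1] := by
        rw [hνdef]
        congr 1
        exact setIntegral_congr_fun measurableSet_Ioc fun t ht => hstepD t ht
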